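/- There is a constant c > 0 depending only on n such that the following holds. Let q be a prime power, n ≥ 1, and 0 ≤ k ≤ m ≤ n. Then the number of pairs (A, C) ∈ M_n(𝔽_q) × M_n(𝔽_q) with rank(A) = m, rank(C) = k, and such that the matrix equation A·X = C has a solution X ∈ M_n(𝔽_q), is at most c · q^{2mn + nk + mk − m² − k²}. -/

import Mathlib

open Matrix Module

variable {F : Type} [Field F]

/-- Rank factorization: a rank-`r` matrix factors as `U * V` with `U` having
injective associated linear map. -/
lemma exists_rank_fact {a b r : ℕ} (M : Matrix (Fin a) (Fin b) F) (h : M.rank = r) :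
    ∃ (U : Matrix (Fin a) (Fin r) F) (V : Matrix (Fin r) (Fin b) F),
      M = U * V ∧ Function.Injective U.mulVecLin := by
  set R := LinearMap.range M.mulVecLin with hRdef
  have hR : finrank F R = r := h
  let bb : Basis (Fin r) F R := finBasisOfFinrankEq F R hR
  have hmem : ∀ j, (fun i => M i j) ∈ R := by
    intro j
    refine ⟨Pi.single j 1, ?_⟩
    ext i
    simp [mulVecLin_apply, mulVec, dotProduct, Pi.single_apply]
  refine ⟨Matrix.of (fun i l => (bb l : Fin a → F) i),
    Matrix.of (fun l j => bb.equivFun ⟨fun i => M i j, hmem j⟩ l), ?_, ?_⟩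
  · have key : ∀ x : Fin r → F,
        (Matrix.of (fun i l => (bb l : Fin a → F) i)).mulVec x
          = ((bb.equivFun.symm x : R) : Fin a → F) := by
      intro x
      ext i
      rw [Basis.equivFun_symm_apply]
      simp [mulVec, dotProduct, mul_comm]
    ext i j
    symm
    have : (fun l => Matrix.of (fun l j => bb.equivFun ⟨fun i => M i j, hmem j⟩ l) l j)
        = bb.equivFun ⟨fun i => M i j, hmem j⟩ := rfl
    calc (Matrix.of (fun i l => (bb l : Fin a → F) i) *
            Matrix.of (fun l j => bb.equivFun ⟨fun i => M i j, hmem j⟩ l)) i j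
        = (Matrix.of (fun i l => (bb l : Fin a → F) i)).mulVec
            (bb.equivFun ⟨fun i => M i j, hmem j⟩) i := by
          simp [mul_apply, mulVec, dotProduct]
      _ = ((bb.equivFun.symm (bb.equivFun ⟨fun i => M i j, hmem j⟩) : R) : Fin a → F) i := by
          rw [key]
      _ = M i j := by rw [bb.equivFun.symm_apply_apply]
  · intro x y hxy
    have key : ∀ x : Fin r → F,
        (Matrix.of (fun i l => (bb l : Fin a → F) i)).mulVecLin x
          = ((bb.equivFun.symm x : R) : Fin a → F) := by
      intro x
      ext i
      rw [mulVecLin_apply, Basis.equivFun_symm_apply]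
      simp [mulVec, dotProduct, mul_comm]
    rw [key, key] at hxy
    exact bb.equivFun.symm.injective (Subtype.coe_injective hxy)

lemma rank_mul_of_inj {a b c : ℕ} (U : Matrix (Fin a) (Fin b) F)
    (Y : Matrix (Fin b) (Fin c) F) (h : Function.Injective U.mulVecLin) :
    (U * Y).rank = Y.rank := by
  rw [Matrix.rank, Matrix.rank, mulVecLin_mul, LinearMap.range_comp]
  exact ((LinearMap.range Y.mulVecLin).equivMapOfInjective _ h).finrank_eq.symm

lemma mul_left_cancel_of_inj {a r c : ℕ} (U : Matrix (Fin a) (Fin r) F)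
    (h : Function.Injective U.mulVecLin) (P Q : Matrix (Fin r) (Fin c) F)
    (hPQ : U * P = U * Q) : P = Q := by
  ext l j
  have hv : U.mulVecLin (fun l => P l j) = U.mulVecLin (fun l => Q l j) := by
    ext i
    simpa [mulVecLin_apply, mulVec, dotProduct, mul_apply] using
      congrFun (congrFun hPQ i) j
  exact congrFun (h hv) l

lemma card_rank_le (F : Type) [Field F] [Fintype F] {a b r : ℕ} (hra : r ≤ a) (hrb : r ≤ b) :
    {M : Matrix (Fin a) (Fin b) F | M.rank = r}.ncard
      ≤ 2 ^ r * Fintype.card F ^ (r * (a + b - r)) := by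
  classical
  set q := Fintype.card F with hq
  have hq2 : 2 ≤ q := Fintype.one_lt_card
  set S := {M : Matrix (Fin a) (Fin b) F | M.rank = r} with hS
  -- lower bound on |GL r F|
  have hGL : q ^ (r * r) ≤ 2 ^ r * Nat.card (GL (Fin r) F) := by
    rw [Matrix.card_GL_field]
    have step : ∀ i : Fin r, q ^ r ≤ 2 * (q ^ r - q ^ (i : ℕ)) := by
      intro i
      have h1 : 2 * q ^ (i : ℕ) ≤ q ^ r := by
        calc 2 * q ^ (i : ℕ) ≤ q * q ^ (i : ℕ) := Nat.mul_le_mul_right _ hq2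
          _ = q ^ ((i : ℕ) + 1) := by ring
          _ ≤ q ^ r := Nat.pow_le_pow_right (by omega) i.2
      have h2 : q ^ (i : ℕ) ≤ q ^ r := Nat.pow_le_pow_right (by omega) i.2.le
      omega
    calc q ^ (r * r) = ∏ _i : Fin r, q ^ r := by
          rw [Finset.prod_const, Finset.card_univ, Fintype.card_fin, ← pow_mul]
      _ ≤ ∏ i : Fin r, 2 * (q ^ r - q ^ (i : ℕ)) :=
          Finset.prod_le_prod' (fun i _ => step i)
      _ = 2 ^ r * ∏ i : Fin r, (q ^ r - q ^ (i : ℕ)) := by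
          rw [Finset.prod_mul_distrib, Finset.prod_const, Finset.card_univ, Fintype.card_fin]
  -- injection  S × GL → pairs of matrices
  have hmain : S.ncard * Nat.card (GL (Fin r) F) ≤ q ^ (a * r) * q ^ (r * b) := by
    have hex := fun (M : ↥S) => exists_rank_fact (F := F) M.1 M.2
    choose U V hfac hinj using hex
    set φ : ↥S × GL (Fin r) F →
        Matrix (Fin a) (Fin r) F × Matrix (Fin r) (Fin b) F :=
      fun p => (U p.1 * (p.2 : Matrix (Fin r) (Fin r) F),
        ((p.2⁻¹ : GL (Fin r) F) : Matrix (Fin r) (Fin r) F) * V p.1) with hφ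
    have hφinj : Function.Injective φ := by
      rintro ⟨M, G⟩ ⟨M', G'⟩ hp
      have h1 : U M * (G : Matrix (Fin r) (Fin r) F) =
          U M' * (G' : Matrix (Fin r) (Fin r) F) := congrArg Prod.fst hp
      have h2 : ((G⁻¹ : GL (Fin r) F) : Matrix (Fin r) (Fin r) F) * V M =
          ((G'⁻¹ : GL (Fin r) F) : Matrix (Fin r) (Fin r) F) * V M' := congrArg Prod.snd hp
      have hMrec : ∀ (N : ↥S) (H : GL (Fin r) F),
          (U N * (H : Matrix (Fin r) (Fin r) F)) *
            (((H⁻¹ : GL (Fin r) F) : Matrix (Fin r) (Fin r) F) * V N) = N.1 := by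
        intro N H
        have hH : (H : Matrix (Fin r) (Fin r) F) *
            ((H⁻¹ : GL (Fin r) F) : Matrix (Fin r) (Fin r) F) = 1 := H.mul_inv
        rw [Matrix.mul_assoc, ← Matrix.mul_assoc _ _ (V N), hH, Matrix.one_mul, ← hfac]
      have hMM : M = M' := by
        apply Subtype.ext
        rw [← hMrec M G, ← hMrec M' G', h1, h2]
      subst hMM
      have hGG : (G : Matrix (Fin r) (Fin r) F) = (G' : Matrix (Fin r) (Fin r) F) :=
        mul_left_cancel_of_inj (U M) (hinj M) _ _ h1
      exact Prod.ext rfl (Units.ext hGG)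
    have hcard := Nat.card_le_card_of_injective φ hφinj
    rw [Nat.card_prod, Nat.card_prod] at hcard
    rw [← Nat.card_coe_set_eq]
    calc Nat.card ↥S * Nat.card (GL (Fin r) F)
        ≤ Nat.card (Matrix (Fin a) (Fin r) F) * Nat.card (Matrix (Fin r) (Fin b) F) := hcard
      _ = q ^ (a * r) * q ^ (r * b) := by
          rw [Nat.card_eq_fintype_card, Nat.card_eq_fintype_card]
          show Fintype.card (Fin a → Fin r → F) * Fintype.card (Fin r → Fin b → F) = _
          simp [Fintype.card_fun, ← pow_mul, mul_comm, hq]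
  -- combine
  have hsplit : a * r + r * b = r * (a + b - r) + r * r := by
    obtain ⟨d, rfl⟩ := Nat.le.dest hra
    have h1 : r + d + b - r = d + b := by omega
    rw [h1]; ring
  have hfinal : S.ncard * q ^ (r * r) ≤ (2 ^ r * q ^ (r * (a + b - r))) * q ^ (r * r) := by
    calc S.ncard * q ^ (r * r) ≤ S.ncard * (2 ^ r * Nat.card (GL (Fin r) F)) :=
          Nat.mul_le_mul_left _ hGL
      _ = 2 ^ r * (S.ncard * Nat.card (GL (Fin r) F)) := by ring
      _ ≤ 2 ^ r * (q ^ (a * r) * q ^ (r * b)) := Nat.mul_le_mul_left _ hmain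
      _ = (2 ^ r * q ^ (r * (a + b - r))) * q ^ (r * r) := by
          rw [← pow_add, hsplit, pow_add]; ring
  exact Nat.le_of_mul_le_mul_right hfinal (Nat.pow_pos (by omega))

/-- A choice of "column basis" matrix for `A` (meaningful when `A.rank = m`). -/
noncomputable def colB (F : Type) [Field F] (n m : ℕ)
    (A : Matrix (Fin n) (Fin n) F) : Matrix (Fin n) (Fin m) F :=
  if h : A.rank = m then Classical.choose (exists_rank_fact A h) else 0

lemma colB_spec {n m : ℕ} (A : Matrix (Fin n) (Fin n) F) (h : A.rank = m) :
    ∃ V : Matrix (Fin m) (Fin n) F,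
      A = colB F n m A * V ∧ Function.Injective (colB F n m A).mulVecLin := by
  rw [colB, dif_pos h]
  exact Classical.choose_spec (exists_rank_fact A h)

lemma key_coords {n m : ℕ} (A C : Matrix (Fin n) (Fin n) F) (hA : A.rank = m)
    (X : Matrix (Fin n) (Fin n) F) (hX : A * X = C) :
    ∃ Y : Matrix (Fin m) (Fin n) F, C = colB F n m A * Y ∧ Y.rank = C.rank := by
  obtain ⟨V, hfac, hinj⟩ := colB_spec A hA
  refine ⟨V * X, ?_, ?_⟩
  · rw [← hX, ← Matrix.mul_assoc, ← hfac]
  · have : C = colB F n m A * (V * X) := by rw [← hX, ← Matrix.mul_assoc, ← hfac]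
    rw [this, rank_mul_of_inj _ _ hinj]

/-- The number of pairs (A, C) with rank(A) = m, rank(C) = k and A·X = C solvable
is at most c · q^{2mn + nk + mk - m² - k²}. -/
theorem count_solvable_pairs (n : ℕ) (hn : 1 ≤ n) :
    ∃ c : ℝ, 0 < c ∧
      ∀ (F : Type) [Field F] [Fintype F],
        ∀ (k m : ℕ), k ≤ m → m ≤ n →
          ({p : Matrix (Fin n) (Fin n) F × Matrix (Fin n) (Fin n) F |
              p.1.rank = m ∧ p.2.rank = k ∧
              ∃ X : Matrix (Fin n) (Fin n) F, p.1 * X = p.2}.ncard : ℝ) ≤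
            c * (Fintype.card F : ℝ) ^
              (2 * (m : ℝ) * n + (n : ℝ) * k + (m : ℝ) * k - (m : ℝ) ^ 2 - (k : ℝ) ^ 2) := by
  refine ⟨(4 : ℝ) ^ n, by positivity, ?_⟩
  intro F _ _ k m hkm hmn
  classical
  set q := Fintype.card F with hq
  set P := {p : Matrix (Fin n) (Fin n) F × Matrix (Fin n) (Fin n) F |
      p.1.rank = m ∧ p.2.rank = k ∧
      ∃ X : Matrix (Fin n) (Fin n) F, p.1 * X = p.2} with hPdef
  set SA := {A : Matrix (Fin n) (Fin n) F | A.rank = m} with hSA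
  set SY := {Y : Matrix (Fin m) (Fin n) F | Y.rank = k} with hSY
  -- Step 1: injection P → SA × SY
  have hstep1 : P.ncard ≤ SA.ncard * SY.ncard := by
    have hkey := fun (p : ↥P) =>
      key_coords p.1.1 p.1.2 p.2.1 (Classical.choose p.2.2.2) (Classical.choose_spec p.2.2.2)
    choose Y hYrec hYrank using hkey
    set f : ↥P → ↥SA × ↥SY := fun p =>
      (⟨p.1.1, p.2.1⟩, ⟨Y p, by rw [hSY]; simp only [Set.mem_setOf_eq]; rw [hYrank p, p.2.2.1]⟩)
      with hf
    have hfinj : Function.Injective f := by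
      intro p p' hpp
      have hA : p.1.1 = p'.1.1 := congrArg (fun z => (z.1 : Matrix (Fin n) (Fin n) F)) hpp
      have hY : Y p = Y p' := congrArg (fun z => (z.2 : Matrix (Fin m) (Fin n) F)) hpp
      apply Subtype.ext
      apply Prod.ext hA
      rw [hYrec p, hYrec p', hA, hY]
    have hcard := Nat.card_le_card_of_injective f hfinj
    rw [Nat.card_prod, Nat.card_coe_set_eq, Nat.card_coe_set_eq,
      Nat.card_coe_set_eq] at hcard
    exact hcard
  -- Step 2: counting bounds
  have hA : SA.ncard ≤ 2 ^ m * q ^ (m * (n + n - m)) := card_rank_le F hmn hmn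
  have hYc : SY.ncard ≤ 2 ^ k * q ^ (k * (m + n - k)) :=
    card_rank_le F hkm (hkm.trans hmn)
  -- Step 3: combine in ℕ
  have hnat : P.ncard ≤ 4 ^ n * q ^ (m * (n + n - m) + k * (m + n - k)) := by
    calc P.ncard ≤ SA.ncard * SY.ncard := hstep1
      _ ≤ (2 ^ m * q ^ (m * (n + n - m))) * (2 ^ k * q ^ (k * (m + n - k))) :=
          Nat.mul_le_mul hA hYc
      _ = (2 ^ (m + k)) * q ^ (m * (n + n - m) + k * (m + n - k)) := by
          rw [pow_add, pow_add]; ring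
      _ ≤ 4 ^ n * q ^ (m * (n + n - m) + k * (m + n - k)) := by
          apply Nat.mul_le_mul_right
          calc 2 ^ (m + k) ≤ 2 ^ (n + n) := Nat.pow_le_pow_right (by omega)
                (by omega)
            _ = 4 ^ n := by rw [show (4:ℕ) = 2^2 from rfl, ← pow_mul, two_mul]
  -- Step 4: cast to ℝ and identify the exponent
  have hq1 : (1 : ℝ) ≤ (q : ℝ) := by
    have h2 : (2 : ℝ) ≤ (q : ℝ) := by
      exact_mod_cast (Fintype.one_lt_card : 1 < q)
    linarith
  have hexp : 2 * (m : ℝ) * n + (n : ℝ) * k + (m : ℝ) * k - (m : ℝ) ^ 2 - (k : ℝ) ^ 2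
      = ((m * (n + n - m) + k * (m + n - k) : ℕ) : ℝ) := by
    have h1 : m ≤ n + n := by omega
    have h2 : k ≤ m + n := by omega
    push_cast [Nat.cast_sub h1, Nat.cast_sub h2]
    ring
  rw [hexp, Real.rpow_natCast]
  calc (P.ncard : ℝ) ≤ ((4 ^ n * q ^ (m * (n + n - m) + k * (m + n - k)) : ℕ) : ℝ) := by
        exact_mod_cast hnat
    _ = (4 : ℝ) ^ n * (q : ℝ) ^ (m * (n + n - m) + k * (m + n - k)) := by push_cast; ring
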